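/- arXiv:2409.15131 — 3 statements merged into one kernel-verified Lean document; each statement's English description precedes it below -/
import Mathlib

section
/- For a slicing P on a triangulated category D and any real number λ with 0 < λ ≤ 1, the pair (P((λ,1]), P((0,λ])) is a torsion pair in the abelian category P((0,1]). -/
open CategoryTheory CategoryTheory.Limits CategoryTheory.Pretriangulated

universe u v

variable (C : Type u) [Category.{v} C] [Preadditive C] [HasZeroObject C] [HasShift C ℤ]
  [∀ n : ℤ, (shiftFunctor C n).Additive] [Pretriangulated C]


/-- A slicing on a triangulated category `C`: a family of full additive subcategories
`P φ`, `φ ∈ ℝ`, such that `P (φ+1) = P φ ⟦1⟧`, morphisms from higher to strictly lower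
phase vanish, and every nonzero object admits a finite Harder–Narasimhan filtration by
triangles with factors in the `P φⱼ` for strictly decreasing `φⱼ`. -/
structure Slicing : Type (max u v) where
  P : ℝ → C → Prop
  zero_mem : ∀ (φ : ℝ) (X : C), IsZero X → P φ X
  iso_closed : ∀ (φ : ℝ) (X Y : C), P φ X → (X ≅ Y) → P φ Y
  shift : ∀ (φ : ℝ) (X : C), P (φ + 1) X ↔ ∃ Y, P φ Y ∧ Nonempty (X ≅ Y⟦(1 : ℤ)⟧)
  hom_zero : ∀ (φ₁ φ₂ : ℝ), φ₁ > φ₂ → ∀ (A B : C), P φ₁ A → P φ₂ B → ∀ f : A ⟶ B, f = 0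
  hn : ∀ E : C, ¬ IsZero E → ∃ (m : ℕ) (φs : Fin m → ℝ) (obj : Fin (m + 1) → C),
    StrictAnti φs ∧ IsZero (obj 0) ∧ Nonempty (obj (Fin.last m) ≅ E) ∧
    ∀ i : Fin m, ∃ (A : C) (f : obj i.castSucc ⟶ obj i.succ) (g : obj i.succ ⟶ A)
      (h : A ⟶ (obj i.castSucc)⟦(1 : ℤ)⟧),
      (Triangle.mk f g h ∈ distTriang C) ∧ P (φs i) A

/-- The extension-closed subcategory of `C` generated by a collection of objects `S`. -/
inductive ExtClosure (S : C → Prop) : C → Prop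
  | of {X : C} : S X → ExtClosure S X
  | zero {X : C} : IsZero X → ExtClosure S X
  | iso {X Y : C} : ExtClosure S X → (X ≅ Y) → ExtClosure S Y
  | ext {T : Triangle C} : (T ∈ distTriang C) → ExtClosure S T.obj₁ → ExtClosure S T.obj₃ →
      ExtClosure S T.obj₂

namespace SlicingAux

variable {C}

/-- Monotonicity of `ExtClosure` in the generating class. -/
lemma extClosure_mono {S S' : C → Prop} (hSS : ∀ Y, S Y → S' Y) {X : C}
    (hX : ExtClosure C S X) : ExtClosure C S' X := by
  induction hX with
  | of h => exact .of (hSS _ h)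
  | zero h => exact .zero h
  | iso _ e ih => exact .iso ih e
  | ext hT _ _ ih₁ ih₃ => exact .ext hT ih₁ ih₃

/-- If all maps from `A` to generators vanish, all maps from `A` to the extension closure
vanish. -/
lemma homZero_target {S : C → Prop} {A : C} (hv : ∀ Y, S Y → ∀ u : A ⟶ Y, u = 0) {B : C}
    (hB : ExtClosure C S B) : ∀ u : A ⟶ B, u = 0 := by
  induction hB with
  | of h => exact hv _ h
  | zero h => exact fun u => h.eq_of_tgt u 0
  | iso _ e ih =>
      intro u
      have : u ≫ e.inv = 0 := ih _
      rw [← Category.comp_id u, ← e.inv_hom_id, ← Category.assoc, this, zero_comp]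
  | ext hT _ _ ih₁ ih₃ =>
      intro u
      obtain ⟨w, hw⟩ := Triangle.coyoneda_exact₂ _ hT u (ih₃ _)
      rw [hw, ih₁ w, zero_comp]

/-- If all maps from generators to `B` vanish, all maps from the extension closure to `B`
vanish. -/
lemma homZero_source {S : C → Prop} {B : C} (hv : ∀ Y, S Y → ∀ u : Y ⟶ B, u = 0) {A : C}
    (hA : ExtClosure C S A) : ∀ u : A ⟶ B, u = 0 := by
  induction hA with
  | of h => exact hv _ h
  | zero h => exact fun u => h.eq_of_src u 0
  | iso _ e ih =>
      intro u
      have : e.hom ≫ u = 0 := by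
        rw [ih (e.hom ≫ u)]
      rw [← Category.id_comp u, ← e.inv_hom_id, Category.assoc, this, comp_zero]
  | ext hT _ _ ih₁ ih₃ =>
      intro u
      obtain ⟨w, hw⟩ := Triangle.yoneda_exact₂ _ hT u (ih₁ _)
      rw [hw, ih₃ w, comp_zero]

/-- Shifting a slice down by one. -/
lemma shift_down (s : Slicing C) (φ : ℝ) (X : C) (hX : s.P φ X) :
    s.P (φ - 1) (X⟦(-1 : ℤ)⟧) := by
  have h1 : s.P (φ - 1 + 1) X := by rwa [sub_add_cancel]
  obtain ⟨Y, hY, ⟨e⟩⟩ := (s.shift (φ - 1) X).mp h1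
  refine s.iso_closed _ Y _ hY ?_
  exact ((shiftFunctorCompIsoId C (1 : ℤ) (-1) (by ring)).app Y).symm ≪≫
    ((shiftFunctor C (-1 : ℤ)).mapIso e).symm

section Unshift

variable {X Y Z : C}

/-- Unshift a morphism into a shifted object. -/
noncomputable def unshiftHom (u : X ⟶ Y⟦(1 : ℤ)⟧) : X⟦(-1 : ℤ)⟧ ⟶ Y :=
  u⟦(-1 : ℤ)⟧' ≫ (shiftFunctorCompIsoId C (1 : ℤ) (-1) (by ring)).hom.app Y

lemma unshiftHom_eq_zero_iff (u : X ⟶ Y⟦(1 : ℤ)⟧) : unshiftHom u = 0 ↔ u = 0 := by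
  rw [unshiftHom, Preadditive.IsIso.comp_right_eq_zero, Functor.map_eq_zero_iff]

lemma unshiftHom_comp (u : X ⟶ Y⟦(1 : ℤ)⟧) (w : Y ⟶ Z) :
    unshiftHom u ≫ w = unshiftHom (u ≫ w⟦(1 : ℤ)⟧') := by
  rw [unshiftHom, unshiftHom, Functor.map_comp, Category.assoc, Category.assoc]
  congr 1
  have := (shiftFunctorCompIsoId C (1 : ℤ) (-1) (by ring)).hom.naturality w
  dsimp at this
  rw [← this]

/-- Unshift a morphism out of a shifted object. -/
noncomputable def coUnshiftHom (v : X⟦(1 : ℤ)⟧ ⟶ Y) : X ⟶ Y⟦(-1 : ℤ)⟧ :=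
  (shiftFunctorCompIsoId C (1 : ℤ) (-1) (by ring)).inv.app X ≫ v⟦(-1 : ℤ)⟧'

lemma coUnshiftHom_eq_zero_iff (v : X⟦(1 : ℤ)⟧ ⟶ Y) : coUnshiftHom v = 0 ↔ v = 0 := by
  rw [coUnshiftHom, Preadditive.IsIso.comp_left_eq_zero, Functor.map_eq_zero_iff]

end Unshift

section Chain

variable {m : ℕ} (obj : Fin (m + 1) → C) (A : Fin m → C)
variable (f : ∀ i : Fin m, obj i.castSucc ⟶ obj i.succ)
variable (g : ∀ i : Fin m, obj i.succ ⟶ A i)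
variable (h : ∀ i : Fin m, A i ⟶ (obj i.castSucc)⟦(1 : ℤ)⟧)

/-- Composite of the chain maps from index `a` to index `a + d`. -/
def chainHom : ∀ (a d : ℕ) (had : a + d ≤ m), (obj ⟨a, by omega⟩ ⟶ obj ⟨a + d, by omega⟩)
  | _, 0, _ => 𝟙 _
  | a, d + 1, hle => chainHom a d (by omega) ≫ f ⟨a + d, by omega⟩

variable (hdist : ∀ i : Fin m, Triangle.mk (f i) (g i) (h i) ∈ distTriang C)
include hdist

/-- A prefix of a chain with zero factors is zero. -/
lemma chain_prefix_isZero (h0 : IsZero (obj ⟨0, by omega⟩)) :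
    ∀ (j : ℕ) (hj : j ≤ m), (∀ i : Fin m, i.val < j → IsZero (A i)) →
      IsZero (obj ⟨j, by omega⟩)
  | 0, _, _ => h0
  | j + 1, hj, hz =>
      Triangle.isZero₂_of_isZero₁₃ _ (hdist ⟨j, by omega⟩)
        (chain_prefix_isZero h0 j (by omega) (fun i hi => hz i (by omega)))
        (hz ⟨j, by omega⟩ (Nat.lt_succ_self j))

/-- Maps into the end of a chain factor through the start if they kill all intermediate
factors. -/
lemma chain_factor {Z : C} : ∀ (a d : ℕ) (hd : a + d ≤ m)
    (w : Z ⟶ obj ⟨a + d, by omega⟩),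
    (∀ i : Fin m, a ≤ i.val → i.val < a + d → ∀ u : Z ⟶ A i, u = 0) →
    ∃ w' : Z ⟶ obj ⟨a, by omega⟩, w = w' ≫ chainHom obj f a d hd
  | a, 0, hd, w, _ => ⟨w, by simp [chainHom]⟩
  | a, d + 1, hd, w, hv => by
      obtain ⟨w₁, hw₁⟩ := Triangle.coyoneda_exact₂ _ (hdist ⟨a + d, by omega⟩) w
        (hv ⟨a + d, by omega⟩ (Nat.le_add_right a d) (Nat.lt_succ_self (a + d)) _)
      obtain ⟨w', hw'⟩ := chain_factor a d (by omega) w₁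
        (fun i h1 h2 u => hv i h1 (by omega) u)
      exact ⟨w', by rw [hw₁, hw', chainHom]; exact Category.assoc _ _ _⟩

/-- A map into the start of a chain which dies at the end and which has no maps into the
(-1)-shifted factors is zero. -/
lemma chain_mono {Z : C} : ∀ (a d : ℕ) (hd : a + d ≤ m) (u : Z ⟶ obj ⟨a, by omega⟩),
    (∀ i : Fin m, a ≤ i.val → i.val < a + d → ∀ z : Z ⟶ (A i)⟦(-1 : ℤ)⟧, z = 0) →
    u ≫ chainHom obj f a d hd = 0 → u = 0
  | a, 0, hd, u, _, hu => by simpa [chainHom] using hu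
  | a, d + 1, hd, u, hv, hu => by
      rw [chainHom, ← Category.assoc] at hu
      obtain ⟨z, hz⟩ := Triangle.coyoneda_exact₂ _
        (inv_rot_of_distTriang _ (hdist ⟨a + d, by omega⟩))
        (u ≫ chainHom obj f a d (by omega)) hu
      rw [hv ⟨a + d, by omega⟩ (Nat.le_add_right a d) (Nat.lt_succ_self (a + d)) z] at hz
      exact chain_mono a d (by omega) u (fun i h1 h2 => hv i h1 (by omega)) (hz.trans zero_comp)

/-- Maps out of a chain prefix with no maps out of the factors are zero. -/
lemma chain_from_prefix_zero {Z : C} (h0 : IsZero (obj ⟨0, by omega⟩)) :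
    ∀ (d : ℕ) (hd : d ≤ m),
    (∀ i : Fin m, i.val < d → ∀ z : A i ⟶ Z, z = 0) →
    ∀ w : obj ⟨d, by omega⟩ ⟶ Z, w = 0
  | 0, _, _, w => h0.eq_of_src w 0
  | d + 1, hd, hv, w => by
      have h1 : f ⟨d, by omega⟩ ≫ w = 0 :=
        chain_from_prefix_zero h0 d (by omega) (fun i hi => hv i (by omega)) _
      obtain ⟨z, hz⟩ := Triangle.yoneda_exact₂ _ (hdist ⟨d, by omega⟩) w h1
      rw [hz, hv ⟨d, by omega⟩ (Nat.lt_succ_self d) z]; exact comp_zero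

omit hdist in
lemma chain_isIso : ∀ (a d : ℕ) (hd : a + d ≤ m),
    (∀ i : Fin m, a ≤ i.val → i.val < a + d → IsIso (f i)) →
    IsIso (chainHom obj f a d hd)
  | a, 0, hd, _ => by rw [chainHom]; infer_instance
  | a, d + 1, hd, hv => by
      rw [chainHom]
      have := chain_isIso a d (by omega) (fun i h1 h2 => hv i h1 (by omega))
      have := hv ⟨a + d, by omega⟩ (Nat.le_add_right a d) (Nat.lt_succ_self (a + d))
      infer_instance

/-- A chain whose factors lie in the extension closure has all its objects in the
extension closure. -/
lemma chain_mem_extClosure {S : C → Prop} (h0 : IsZero (obj ⟨0, by omega⟩)) :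
    ∀ (j : ℕ) (hj : j ≤ m), (∀ i : Fin m, i.val < j → ExtClosure C S (A i)) →
      ExtClosure C S (obj ⟨j, by omega⟩)
  | 0, _, _ => .zero h0
  | j + 1, hj, hmem =>
      .ext (hdist ⟨j, by omega⟩)
        (chain_mem_extClosure h0 j (by omega) (fun i hi => hmem i (by omega)))
        (hmem ⟨j, by omega⟩ (Nat.lt_succ_self j))


/-- The first nonzero factor of a chain admits a nonzero map to the end of the chain. -/
lemma chain_top_nonzero_map (h0 : IsZero (obj ⟨0, by omega⟩)) (i₀ : Fin m)
    (hA : ¬ IsZero (A i₀)) (hpre : ∀ j : Fin m, j.val < i₀.val → IsZero (A j))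
    (hv : ∀ j : Fin m, i₀.val < j.val → ∀ z : A i₀ ⟶ (A j)⟦(-1 : ℤ)⟧, z = 0) :
    ∃ v : A i₀ ⟶ obj (Fin.last m), v ≠ 0 := by
  have hz1 : IsZero ((Triangle.mk (f i₀) (g i₀) (h i₀)).obj₁) :=
    chain_prefix_isZero obj A f g h hdist h0 i₀.val i₀.isLt.le (fun j hj => hpre j hj)
  have hiso : IsIso (g i₀) := (Triangle.isZero₁_iff_isIso₂ _ (hdist i₀)).mp hz1
  have hidx : (⟨i₀.val + 1 + (m - (i₀.val + 1)), by omega⟩ : Fin (m + 1)) = Fin.last m := by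
    apply Fin.ext
    simp [Fin.last]
  have hle1 : i₀.val + 1 + (m - (i₀.val + 1)) ≤ m := by omega
  refine ⟨inv (g i₀) ≫ chainHom obj f (i₀.val + 1) (m - (i₀.val + 1)) hle1 ≫
    eqToHom (congrArg obj hidx), ?_⟩
  intro h0'
  rw [← Category.assoc, Preadditive.IsIso.comp_right_eq_zero] at h0'
  have h2 : (inv (g i₀) ≫ 𝟙 _ : A i₀ ⟶ _) = 0 := by
    refine chain_mono obj A f g h hdist (i₀.val + 1) (m - (i₀.val + 1)) hle1 _
      (fun j hj1 hj2 z => hv j (by omega) z) ?_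
    rw [Category.comp_id]
    exact h0'
  rw [Category.comp_id] at h2
  apply hA
  rw [IsZero.iff_id_eq_zero, ← IsIso.inv_hom_id (g i₀), h2, zero_comp]

/-- The last nonzero factor of a chain receives a nonzero map from the end of the chain. -/
lemma chain_bot_nonzero_map (h0 : IsZero (obj ⟨0, by omega⟩)) (i₁ : Fin m)
    (hA : ¬ IsZero (A i₁)) (hsuf : ∀ j : Fin m, i₁.val < j.val → IsZero (A j))
    (hv : ∀ j : Fin m, j.val < i₁.val → ∀ z : A j ⟶ (A i₁)⟦(-1 : ℤ)⟧, z = 0) :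
    ∃ q : obj (Fin.last m) ⟶ A i₁, q ≠ 0 := by
  have hg : g i₁ ≠ 0 := by
    intro hg0
    obtain ⟨z, hz⟩ := Triangle.yoneda_exact₂ _ (rot_of_distTriang _ (hdist i₁)) (𝟙 (A i₁))
      (by exact (Category.comp_id _).trans hg0)
    have hz0 : z = 0 := by
      refine (coUnshiftHom_eq_zero_iff (X := obj i₁.castSucc) (Y := A i₁) z).mp ?_
      exact chain_from_prefix_zero obj A f g h hdist h0 i₁.val i₁.isLt.le
        (fun j hj w => hv j hj w) _
    apply hA
    rw [IsZero.iff_id_eq_zero, hz, hz0]; exact comp_zero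
  have hle1 : i₁.val + 1 + (m - (i₁.val + 1)) ≤ m := by omega
  have hidx : (⟨i₁.val + 1 + (m - (i₁.val + 1)), by omega⟩ : Fin (m + 1)) = Fin.last m := by
    apply Fin.ext
    simp [Fin.last]
  haveI hcIso : IsIso (chainHom obj f (i₁.val + 1) (m - (i₁.val + 1)) hle1) :=
    chain_isIso obj f (i₁.val + 1) (m - (i₁.val + 1)) hle1
      (fun j h1 _ => (Triangle.isZero₃_iff_isIso₁ _ (hdist j)).mp (hsuf j (by omega)))
  refine ⟨eqToHom (congrArg obj hidx.symm) ≫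
    inv (chainHom obj f (i₁.val + 1) (m - (i₁.val + 1)) hle1) ≫ g i₁, ?_⟩
  intro hq0
  rw [Preadditive.IsIso.comp_left_eq_zero, Preadditive.IsIso.comp_left_eq_zero] at hq0
  exact hg hq0


end Chain

end SlicingAux

/-- For a slicing `P` on a triangulated category `D` and any real `λ` with `0 < λ ≤ 1`,
the pair `(P((λ,1]), P((0,λ]))` is a torsion pair in the abelian category `P((0,1])`:
there are no nonzero morphisms from the torsion class to the torsion-free class, and
every object of `P((0,1])` is an extension of an object of `P((0,λ])` by an object
of `P((λ,1])`. -/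
theorem slicing_torsion_pair (s : Slicing C) (l : ℝ) (hl0 : 0 < l) (hl1 : l ≤ 1) :
    (∀ X : C, ExtClosure C (fun Y => ∃ φ, l < φ ∧ φ ≤ 1 ∧ s.P φ Y) X →
        ExtClosure C (fun Y => ∃ φ, 0 < φ ∧ φ ≤ 1 ∧ s.P φ Y) X) ∧
    (∀ X : C, ExtClosure C (fun Y => ∃ φ, 0 < φ ∧ φ ≤ l ∧ s.P φ Y) X →
        ExtClosure C (fun Y => ∃ φ, 0 < φ ∧ φ ≤ 1 ∧ s.P φ Y) X) ∧
    (∀ (A B : C), ExtClosure C (fun Y => ∃ φ, l < φ ∧ φ ≤ 1 ∧ s.P φ Y) A →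
        ExtClosure C (fun Y => ∃ φ, 0 < φ ∧ φ ≤ l ∧ s.P φ Y) B → ∀ f : A ⟶ B, f = 0) ∧
    (∀ X : C, ExtClosure C (fun Y => ∃ φ, 0 < φ ∧ φ ≤ 1 ∧ s.P φ Y) X →
        ∃ (T F : C) (f : T ⟶ X) (g : X ⟶ F) (h : F ⟶ T⟦(1 : ℤ)⟧),
          (Triangle.mk f g h ∈ distTriang C) ∧
          ExtClosure C (fun Y => ∃ φ, l < φ ∧ φ ≤ 1 ∧ s.P φ Y) T ∧
          ExtClosure C (fun Y => ∃ φ, 0 < φ ∧ φ ≤ l ∧ s.P φ Y) F) := by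
  classical
  have hi_lt : ∀ Y, (∃ φ, l < φ ∧ φ ≤ 1 ∧ s.P φ Y) → (∃ φ, 0 < φ ∧ φ ≤ 1 ∧ s.P φ Y) :=
    fun Y ⟨φ, h1, h2, h3⟩ => ⟨φ, lt_trans hl0 h1, h2, h3⟩
  have lo_lt : ∀ Y, (∃ φ, 0 < φ ∧ φ ≤ l ∧ s.P φ Y) → (∃ φ, 0 < φ ∧ φ ≤ 1 ∧ s.P φ Y) :=
    fun Y ⟨φ, h1, h2, h3⟩ => ⟨φ, h1, le_trans h2 hl1, h3⟩
  refine ⟨fun X hX => SlicingAux.extClosure_mono hi_lt hX,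
    fun X hX => SlicingAux.extClosure_mono lo_lt hX, ?_, ?_⟩
  · intro A B hA hB u
    refine SlicingAux.homZero_source (fun Y hY w => ?_) hA u
    obtain ⟨φ, hφl, hφ1, hφP⟩ := hY
    refine SlicingAux.homZero_target (fun Y' hY' w' => ?_) hB w
    obtain ⟨φ', hφ'0, hφ'l, hφ'P⟩ := hY'
    exact s.hom_zero φ φ' (lt_of_le_of_lt hφ'l hφl) _ _ hφP hφ'P w'
  · intro X hX
    by_cases hXz : IsZero X
    · open ZeroObject in
      exact ⟨X, 0, 𝟙 X, 0, 0, contractible_distinguished X, .zero hXz, .zero (isZero_zero C)⟩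
    obtain ⟨m, φs, obj, hanti, h0, ⟨isoX⟩, htri⟩ := s.hn X hXz
    choose A f g h hdist hP using htri
    have h0' : IsZero (obj ⟨0, by omega⟩) :=
      h0.of_iso (eqToIso (congrArg obj (Fin.ext (by simp))))
    -- upper bound on phases of nonzero factors
    have TOPB : ∀ i : Fin m, ¬ IsZero (A i) → φs i ≤ 1 := by
      intro i hi
      have hex0 : ∃ nn, ∃ hnn : nn < m, ¬ IsZero (A ⟨nn, hnn⟩) := ⟨i.val, i.isLt, by simpa using hi⟩
      obtain ⟨hn₀m, hA₀⟩ := Nat.find_spec hex0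
      set i₀ : Fin m := ⟨Nat.find hex0, hn₀m⟩ with hi₀
      have hle : i₀ ≤ i := by
        simp only [Fin.le_def]
        exact Nat.find_min' hex0 ⟨i.isLt, by simpa using hi⟩
      have hmono : φs i ≤ φs i₀ := hanti.antitone hle
      suffices hs : φs i₀ ≤ 1 by linarith
      by_contra h1
      push_neg at h1
      obtain ⟨v, hv0⟩ := SlicingAux.chain_top_nonzero_map obj A f g h hdist h0' i₀ hA₀
        (fun j hj => by
          by_contra hzz
          exact Nat.find_min hex0 hj ⟨j.isLt, by simpa using hzz⟩)
        (fun j hj z => s.hom_zero (φs i₀) (φs j - 1)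
          (by have := hanti (show i₀ < j from hj); linarith) _ _ (hP i₀)
          (SlicingAux.shift_down s _ _ (hP j)) z)
      apply hv0
      have hvX : (v ≫ isoX.hom : A i₀ ⟶ X) = 0 :=
        SlicingAux.homZero_target (fun Y hY u => by
          obtain ⟨φ, hφ0, hφ1, hPY⟩ := hY
          exact s.hom_zero (φs i₀) φ (by linarith) _ _ (hP i₀) hPY u) hX _
      rw [← Category.comp_id v, ← isoX.hom_inv_id, ← Category.assoc, hvX, zero_comp]
    -- lower bound on phases of nonzero factors
    have BOTB : ∀ i : Fin m, ¬ IsZero (A i) → 0 < φs i := by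
      intro i hi
      have hQi : ∃ hnn : i.val < m, ¬ IsZero (A ⟨i.val, hnn⟩) := ⟨i.isLt, by simpa using hi⟩
      have hQ1 := Nat.findGreatest_spec (P := fun nn => ∃ hnn : nn < m, ¬ IsZero (A ⟨nn, hnn⟩))
        i.isLt.le hQi
      obtain ⟨hn₁m, hA₁⟩ := hQ1
      set i₁ : Fin m := ⟨_, hn₁m⟩ with hi₁
      have hge : i ≤ i₁ := by
        simp only [Fin.le_def]
        exact Nat.le_findGreatest i.isLt.le hQi
      have hmono : φs i₁ ≤ φs i := hanti.antitone hge
      suffices hs : 0 < φs i₁ by linarith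
      by_contra h1
      push_neg at h1
      obtain ⟨q, hq0⟩ := SlicingAux.chain_bot_nonzero_map obj A f g h hdist h0' i₁ hA₁
        (fun j hj => by
          by_contra hzz
          exact Nat.findGreatest_is_greatest hj j.isLt.le ⟨j.isLt, by simpa using hzz⟩)
        (fun j hj z => s.hom_zero (φs j) (φs i₁ - 1)
          (by have := hanti (show j < i₁ from hj); linarith) _ _ (hP j)
          (SlicingAux.shift_down s _ _ (hP i₁)) z)
      apply hq0
      have hqX : (isoX.inv ≫ q : X ⟶ A i₁) = 0 :=
        SlicingAux.homZero_source (fun Y hY u => by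
          obtain ⟨φ, hφ0, hφ1, hPY⟩ := hY
          exact s.hom_zero φ (φs i₁) (by linarith) _ _ hPY (hP i₁) u) hX _
      rw [← Category.id_comp q, ← isoX.hom_inv_id, Category.assoc, hqX, comp_zero]
    -- the splitting index k
    have hex : ∃ nn, ∀ i : Fin m, nn ≤ i.val → φs i ≤ l :=
      ⟨m, fun i hi => absurd i.isLt (by omega)⟩
    set k := Nat.find hex with hkdef
    have hkm : k ≤ m := Nat.find_min' hex (fun i hi => absurd i.isLt (by omega))
    have hk1 : ∀ i : Fin m, k ≤ i.val → φs i ≤ l := Nat.find_spec hex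
    have hk2 : ∀ i : Fin m, i.val < k → l < φs i := by
      intro i hik
      by_contra hc
      push_neg at hc
      exact Nat.find_min hex hik (fun j hj => le_trans
        (hanti.antitone (by simpa only [Fin.le_def] using hj)) hc)
    have hkmk : k + (m - k) ≤ m := by omega
    have hklt : k < m + 1 := by omega
    have hidx : (⟨k + (m - k), by omega⟩ : Fin (m + 1)) = Fin.last m := by
      apply Fin.ext
      simp [Fin.last]
      omega
    set ch := SlicingAux.chainHom obj f k (m - k) hkmk with hchdef
    set e : obj ⟨k, hklt⟩ ⟶ X := ch ≫ eqToHom (congrArg obj hidx) ≫ isoX.hom with hedef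
    obtain ⟨F, gc, hc, hTc⟩ := distinguished_cocone_triangle e
    have hiT : ExtClosure C (fun Y => ∃ φ, l < φ ∧ φ ≤ 1 ∧ s.P φ Y) (obj ⟨k, hklt⟩) := by
      refine SlicingAux.chain_mem_extClosure obj A f g h hdist h0' k hkm (fun i hik => ?_)
      by_cases hz : IsZero (A i)
      · exact .zero hz
      · exact .of ⟨φs i, hk2 i hik, TOPB i hz, hP i⟩
    refine ⟨obj ⟨k, hklt⟩, F, e, gc, hc, hTc, hiT, ?_⟩
    by_cases hFz : IsZero F
    · exact .zero hFz
    obtain ⟨n, ψs, fobj, fanti, f0, ⟨isoF⟩, ftri⟩ := s.hn F hFz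
    choose B fB gB hB fdist fP using ftri
    have f0' : IsZero (fobj ⟨0, by omega⟩) :=
      f0.of_iso (eqToIso (congrArg fobj (Fin.ext (by simp))))
    -- upper bound for phases of the cone factors
    have FTOP : ∀ i : Fin n, ¬ IsZero (B i) → ψs i ≤ l := by
      intro i hi
      have hex0 : ∃ nn, ∃ hnn : nn < n, ¬ IsZero (B ⟨nn, hnn⟩) := ⟨i.val, i.isLt, by simpa using hi⟩
      obtain ⟨hn₀m, hB₀⟩ := Nat.find_spec hex0
      set i₀ : Fin n := ⟨Nat.find hex0, hn₀m⟩ with hi₀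
      have hle : i₀ ≤ i := by
        simp only [Fin.le_def]
        exact Nat.find_min' hex0 ⟨i.isLt, by simpa using hi⟩
      have hmono : ψs i ≤ ψs i₀ := fanti.antitone hle
      suffices hs : ψs i₀ ≤ l by linarith
      by_contra h1
      push_neg at h1
      obtain ⟨v, hv0⟩ := SlicingAux.chain_top_nonzero_map fobj B fB gB hB fdist f0' i₀ hB₀
        (fun j hj => by
          by_contra hzz
          exact Nat.find_min hex0 hj ⟨j.isLt, by simpa using hzz⟩)
        (fun j hj z => s.hom_zero (ψs i₀) (ψs j - 1)
          (by have := fanti (show i₀ < j from hj); linarith) _ _ (fP i₀)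
          (SlicingAux.shift_down s _ _ (fP j)) z)
      apply hv0
      set vF : B i₀ ⟶ F := (v ≫ isoF.hom : B i₀ ⟶ F) with hvF
      -- step A : `vF ≫ hc = 0`
      have hA1 : (vF ≫ hc) ≫ e⟦(1 : ℤ)⟧' = 0 := by
        have h31 := comp_distTriang_mor_zero₃₁ _ hTc
        replace h31 : hc ≫ e⟦(1 : ℤ)⟧' = 0 := h31
        rw [Category.assoc, h31, comp_zero]
      have hA2 : (vF ≫ hc) ≫ ch⟦(1 : ℤ)⟧' = 0 := by
        rw [hedef, Functor.map_comp, ← Category.assoc, Preadditive.IsIso.comp_right_eq_zero]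
          at hA1
        exact hA1
      have hA3 : SlicingAux.unshiftHom (vF ≫ hc) ≫ ch = 0 := by
        rw [SlicingAux.unshiftHom_comp, hA2]
        simp [SlicingAux.unshiftHom]
      have hA4 : SlicingAux.unshiftHom (vF ≫ hc) = 0 := by
        refine SlicingAux.chain_mono obj A f g h hdist k (m - k) hkmk _
          (fun j hj1 hj2 z => s.hom_zero (ψs i₀ - 1) (φs j - 1)
            (by have := hk1 j hj1; linarith) _ _
            (SlicingAux.shift_down s _ _ (fP i₀)) (SlicingAux.shift_down s _ _ (hP j)) z) hA3
      have hu0 : vF ≫ hc = 0 := (SlicingAux.unshiftHom_eq_zero_iff _).mp hA4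
      -- step B : factor through `gc`
      obtain ⟨w, hw⟩ : ∃ w : B i₀ ⟶ X, vF = w ≫ gc := Triangle.coyoneda_exact₂ _ (rot_of_distTriang _ hTc) vF
        (by exact hu0)
      -- step C : factor `w` through `e`
      obtain ⟨w', hw'⟩ := SlicingAux.chain_factor obj A f g h hdist k (m - k) hkmk
        (w ≫ isoX.inv ≫ eqToHom (congrArg obj hidx.symm))
        (fun j hj1 hj2 u => s.hom_zero (ψs i₀) (φs j)
          (lt_of_le_of_lt (hk1 j hj1) h1) _ _ (fP i₀) (hP j) u)
      have hwe : w = w' ≫ e := by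
        have h5 : w = (w ≫ isoX.inv ≫ eqToHom (congrArg obj hidx.symm)) ≫
            (eqToHom (congrArg obj hidx) ≫ isoX.hom) := by
          simp
        rw [h5, hw', hedef]
        simp [hchdef]
      have hvF0 : vF = 0 := by
        have h12 := comp_distTriang_mor_zero₁₂ _ hTc
        replace h12 : e ≫ gc = 0 := h12
        rw [hw, hwe]
        rw [Category.assoc, h12, comp_zero]
      rw [← Category.comp_id v, ← isoF.hom_inv_id, ← Category.assoc, ← hvF, hvF0, zero_comp]
    -- lower bound for phases of the cone factors
    have FBOT : ∀ i : Fin n, ¬ IsZero (B i) → 0 < ψs i := by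
      intro i hi
      have hQi : ∃ hnn : i.val < n, ¬ IsZero (B ⟨i.val, hnn⟩) := ⟨i.isLt, by simpa using hi⟩
      have hQ1 := Nat.findGreatest_spec (P := fun nn => ∃ hnn : nn < n, ¬ IsZero (B ⟨nn, hnn⟩))
        i.isLt.le hQi
      obtain ⟨hn₁m, hB₁⟩ := hQ1
      set i₁ : Fin n := ⟨_, hn₁m⟩ with hi₁
      have hge : i ≤ i₁ := by
        simp only [Fin.le_def]
        exact Nat.le_findGreatest i.isLt.le hQi
      have hmono : ψs i₁ ≤ ψs i := fanti.antitone hge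
      suffices hs : 0 < ψs i₁ by linarith
      by_contra h1
      push_neg at h1
      obtain ⟨q, hq0⟩ := SlicingAux.chain_bot_nonzero_map fobj B fB gB hB fdist f0' i₁ hB₁
        (fun j hj => by
          by_contra hzz
          exact Nat.findGreatest_is_greatest hj j.isLt.le ⟨j.isLt, by simpa using hzz⟩)
        (fun j hj z => s.hom_zero (ψs j) (ψs i₁ - 1)
          (by have := fanti (show j < i₁ from hj); linarith) _ _ (fP j)
          (SlicingAux.shift_down s _ _ (fP i₁)) z)
      apply hq0
      have hgp : gc ≫ (isoF.inv ≫ q) = 0 := by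
        refine SlicingAux.homZero_source (fun Y hY u => ?_) hX _
        obtain ⟨φ, hφ0, hφ1, hPY⟩ := hY
        exact s.hom_zero φ (ψs i₁) (by linarith) _ _ hPY (fP i₁) u
      obtain ⟨z, hz⟩ : ∃ z : (obj ⟨k, hklt⟩)⟦(1 : ℤ)⟧ ⟶ B i₁, isoF.inv ≫ q = hc ≫ z :=
        Triangle.yoneda_exact₂ _ (rot_of_distTriang _ hTc) (isoF.inv ≫ q) (by exact hgp)
      have hz0 : z = 0 := by
        rw [← SlicingAux.coUnshiftHom_eq_zero_iff]
        exact SlicingAux.chain_from_prefix_zero obj A f g h hdist h0' k hkm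
          (fun j hj w => s.hom_zero (φs j) (ψs i₁ - 1)
            (by have := hk2 j hj; linarith) _ _ (hP j)
            (SlicingAux.shift_down s _ _ (fP i₁)) w) _
      have hp0 : isoF.inv ≫ q = 0 := by
        rw [hz, hz0, comp_zero]
      rw [← Category.id_comp q, ← isoF.hom_inv_id, Category.assoc, hp0, comp_zero]
    -- conclude : `F` lies in the extension closure of the slices in `(0, l]`
    have hnlt : n ≤ n := le_rfl
    have hmem : ExtClosure C (fun Y => ∃ φ, 0 < φ ∧ φ ≤ l ∧ s.P φ Y) (fobj ⟨n, by omega⟩) := by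
      refine SlicingAux.chain_mem_extClosure fobj B fB gB hB fdist f0' n le_rfl (fun i _ => ?_)
      by_cases hz : IsZero (B i)
      · exact .zero hz
      · exact .of ⟨ψs i, FBOT i hz, FTOP i hz, fP i⟩
    have hlast : (⟨n, by omega⟩ : Fin (n + 1)) = Fin.last n := Fin.ext (by simp)
    exact .iso hmem (eqToIso (congrArg fobj hlast) ≪≫ isoF)
end

section
/- Let A be a finite-length abelian category with finitely many isomorphism classes of simple objects S₁,...,Sₙ. Then every group homomorphism Z : K(A) → ℂ with Z([Sᵢ]) in the strict upper half-plane (for all i) takes every nonzero object of A to the semi-closed upper half-plane {r e^{iπθ} : r > 0, 0 < θ ≤ 1}, and satisfies the Harder–Narasimhan property: every nonzero object E of A has a finite filtration 0 = E₀ ⊂ E₁ ⊂ ... ⊂ E_m = E whose quotients are Z-semistable of strictly decreasing phases. -/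
open CategoryTheory CategoryTheory.Limits

universe u v

variable (C : Type u) [Category.{v} C] [Abelian C]

/-- `z` lies in the semi-closed upper half-plane `{r e^{iπθ} : r > 0, 0 < θ ≤ 1}`. -/
def InUHP (z : ℂ) : Prop :=
  ∃ (r θ : ℝ), 0 < r ∧ 0 < θ ∧ θ ≤ 1 ∧ z = r * Complex.exp (θ * Real.pi * Complex.I)

/-- The phase `(1/π) arg z ∈ (0, 1]` of a point of the semi-closed upper half-plane,
with `arg` chosen in `(0, π]`. -/
noncomputable def uphase (z : ℂ) : ℝ := Complex.arg z / Real.pi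

/-- `Z` is additive, i.e. is induced by a group homomorphism `K(C) → ℂ` on the
Grothendieck group: for every short exact sequence `0 → A → E → B → 0`,
`Z(E) = Z(A) + Z(B)`. -/
def IsAdditive (Z : C → ℂ) : Prop :=
  ∀ S : ShortComplex C, S.ShortExact → Z S.X₂ = Z S.X₁ + Z S.X₃

/-- `X` is `Z`-semistable: `X` is nonzero and every nonzero proper subobject `Y ⊂ X`
satisfies `φ(Y) ≤ φ(X)`. -/
def IsSemistable (Z : C → ℂ) (X : C) : Prop :=
  ¬ IsZero X ∧ ∀ (Y : C) (i : Y ⟶ X), Mono i → ¬ IsZero Y → ¬ IsIso i →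
    uphase (Z Y) ≤ uphase (Z X)

/-- `X` is `Z`-stable: `X` is nonzero and every nonzero proper subobject `Y ⊂ X`
satisfies `φ(Y) < φ(X)`. -/
def IsStable (Z : C → ℂ) (X : C) : Prop :=
  ¬ IsZero X ∧ ∀ (Y : C) (i : Y ⟶ X), Mono i → ¬ IsZero Y → ¬ IsIso i →
    uphase (Z Y) < uphase (Z X)

/-- A finite composition series `0 = A₀ ⊂ A₁ ⊂ ... ⊂ A_m = E` of `E`, with simple
successive quotients. -/
structure CompSeries (E : C) : Type (max u v) where
  m : ℕ
  obj : Fin (m + 1) → C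
  incl : ∀ i, obj i ⟶ E
  mono : ∀ i, Mono (incl i)
  step : ∀ i : Fin m, obj i.castSucc ⟶ obj i.succ
  fac : ∀ i : Fin m, step i ≫ incl i.succ = incl i.castSucc
  zero : IsZero (obj 0)
  top : IsIso (incl (Fin.last m))
  quot_simple : ∀ i : Fin m, Simple (cokernel (step i))

/-- A Harder–Narasimhan filtration of `E` with respect to `Z`: a chain of subobjects
whose successive quotients are `Z`-semistable of strictly decreasing phases. -/
structure HNFiltration (Z : C → ℂ) (E : C) : Type (max u v) where
  m : ℕ
  obj : Fin (m + 1) → C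
  incl : ∀ i, obj i ⟶ E
  mono : ∀ i, Mono (incl i)
  step : ∀ i : Fin m, obj i.castSucc ⟶ obj i.succ
  fac : ∀ i : Fin m, step i ≫ incl i.succ = incl i.castSucc
  zero : IsZero (obj 0)
  top : IsIso (incl (Fin.last m))
  quot_semistable : ∀ i : Fin m, IsSemistable C Z (cokernel (step i))
  decreasing : ∀ i j : Fin m, i < j →
    uphase (Z (cokernel (step j))) < uphase (Z (cokernel (step i)))

namespace HNAux

open ZeroObject

/-! ### Phase arithmetic -/

lemma arg_mem {z : ℂ} (hz : 0 < z.im) : 0 < z.arg ∧ z.arg < Real.pi := by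
  constructor
  · rcases lt_trichotomy z.arg 0 with h | h | h
    · exact absurd (Complex.arg_neg_iff.mp h) (by linarith)
    · have := Complex.arg_eq_zero_iff.mp h
      linarith [this.2]
    · exact h
  · rw [Complex.arg_lt_pi_iff]; right; linarith

lemma cross_eq {z w : ℂ} :
    z.re * w.im - w.re * z.im = ‖z‖ * ‖w‖ * Real.sin (w.arg - z.arg) := by
  rw [Real.sin_sub]
  rw [← Complex.norm_mul_cos_arg z, ← Complex.norm_mul_sin_arg z, ← Complex.norm_mul_cos_arg w,
    ← Complex.norm_mul_sin_arg w]
  ring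

lemma arg_lt_arg_iff {z w : ℂ} (hz : 0 < z.im) (hw : 0 < w.im) :
    z.arg < w.arg ↔ 0 < z.re * w.im - w.re * z.im := by
  have hz0 : z ≠ 0 := fun h => by simp [h] at hz
  have hw0 : w ≠ 0 := fun h => by simp [h] at hw
  obtain ⟨ha1, ha2⟩ := arg_mem hz
  obtain ⟨hb1, hb2⟩ := arg_mem hw
  rw [cross_eq]
  have habs : 0 < ‖z‖ * ‖w‖ :=
    mul_pos (norm_pos_iff.mpr hz0) (norm_pos_iff.mpr hw0)
  constructor
  · intro h
    have : 0 < Real.sin (w.arg - z.arg) :=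
      Real.sin_pos_of_pos_of_lt_pi (by linarith) (by linarith)
    exact mul_pos habs this
  · intro h
    by_contra hle
    push_neg at hle
    have : 0 ≤ Real.sin (z.arg - w.arg) :=
      Real.sin_nonneg_of_nonneg_of_le_pi (by linarith) (by linarith)
    have h2 : Real.sin (w.arg - z.arg) ≤ 0 := by
      rw [show w.arg - z.arg = -(z.arg - w.arg) by ring, Real.sin_neg]; linarith
    nlinarith

lemma uphase_lt_iff {z w : ℂ} (hz : 0 < z.im) (hw : 0 < w.im) :
    uphase z < uphase w ↔ 0 < z.re * w.im - w.re * z.im := by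
  unfold uphase
  rw [div_lt_div_iff_of_pos_right Real.pi_pos]
  exact arg_lt_arg_iff hz hw

lemma uphase_le_iff {z w : ℂ} (hz : 0 < z.im) (hw : 0 < w.im) :
    uphase z ≤ uphase w ↔ 0 ≤ z.re * w.im - w.re * z.im := by
  rw [← not_lt, ← not_lt, not_iff_not, uphase_lt_iff hw hz]
  constructor <;> intro h <;> nlinarith

lemma seesaw_left_le {a b : ℂ} (ha : 0 < a.im) (hb : 0 < b.im)
    (h : uphase (a + b) ≤ uphase b) : uphase a ≤ uphase (a + b) := by
  have hab : 0 < (a + b).im := by simp only [Complex.add_im]; linarith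
  rw [uphase_le_iff ha hab]
  rw [uphase_le_iff hab hb] at h
  simp only [Complex.add_re, Complex.add_im] at *
  nlinarith

lemma seesaw_right_le {a b : ℂ} (ha : 0 < a.im) (hb : 0 < b.im)
    (h : uphase a ≤ uphase b) : uphase (a + b) ≤ uphase b := by
  have hab : 0 < (a + b).im := by simp only [Complex.add_im]; linarith
  rw [uphase_le_iff hab hb]
  rw [uphase_le_iff ha hb] at h
  simp only [Complex.add_re, Complex.add_im] at *
  nlinarith

/-! ### Category-theoretic basics -/

variable {C : Type u} [Category.{v} C] [Abelian C]

lemma mono_of_isZero_src {A X : C} (h : IsZero A) (f : A ⟶ X) : Mono f :=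
  ⟨fun g h' _ => h.eq_of_tgt g h'⟩

lemma ses_of_mono {A X : C} (f : A ⟶ X) [Mono f] :
    (ShortComplex.mk f (cokernel.π f) (cokernel.condition f)).ShortExact := by
  apply ShortComplex.ShortExact.mk
  exact ShortComplex.exact_of_g_is_cokernel _ (cokernelIsCokernel f)

lemma ses_of_epi {X Q : C} (g : X ⟶ Q) [Epi g] :
    (ShortComplex.mk (kernel.ι g) g (kernel.condition g)).ShortExact := by
  apply ShortComplex.ShortExact.mk
  exact ShortComplex.exact_of_f_is_kernel _ (kernelIsKernel g)

lemma cokernel_not_isZero {A X : C} (f : A ⟶ X) [Mono f] (h : ¬ IsIso f) :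
    ¬ IsZero (cokernel f) := by
  intro hz
  haveI : Epi f := Abelian.epi_of_cokernel_π_eq_zero _ (hz.eq_zero_of_tgt _)
  exact h (isIso_of_mono_of_epi f)

section Zlemmas

variable {Z : C → ℂ} (hadd : IsAdditive C Z)

include hadd

lemma Z_zero {X : C} (h : IsZero X) : Z X = 0 := by
  have w : 𝟙 X ≫ 𝟙 X = 0 := by
    rw [h.eq_of_src (𝟙 X) 0]; simp
  have hse : (ShortComplex.mk (𝟙 X) (𝟙 X) w).ShortExact := by
    apply ShortComplex.ShortExact.mk
    exact ShortComplex.exact_of_isZero_X₂ _ h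
  have h2 := hadd _ hse
  simp only [ShortComplex.mk] at h2
  nth_rewrite 1 [← add_zero (Z X)] at h2
  exact (add_left_cancel h2).symm

lemma Z_iso {X Y : C} (e : X ≅ Y) : Z X = Z Y := by
  have hz : IsZero (0 : C) := isZero_zero C
  have w : (0 : (0:C) ⟶ X) ≫ e.hom = 0 := zero_comp
  have hse : (ShortComplex.mk (0 : (0:C) ⟶ X) e.hom w).ShortExact := by
    have : Mono (0 : (0:C) ⟶ X) := mono_of_isZero_src hz _
    apply ShortComplex.ShortExact.mk
    rw [ShortComplex.exact_iff_mono]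
    · infer_instance
    · rfl
  have h2 := hadd _ hse
  simp only [ShortComplex.mk] at h2
  rw [h2, Z_zero hadd hz, zero_add]

lemma Z_mono {A X : C} (f : A ⟶ X) [Mono f] : Z X = Z A + Z (cokernel f) :=
  hadd _ (ses_of_mono f)

lemma Z_epi {X Q : C} (g : X ⟶ Q) [Epi g] : Z X = Z (kernel g) + Z Q :=
  hadd _ (ses_of_epi g)

lemma semistable_of_iso {X Y : C} (e : X ≅ Y) (h : IsSemistable C Z X) :
    IsSemistable C Z Y := by
  refine ⟨fun hz => h.1 (hz.of_iso e), fun W j hj hW hIso => ?_⟩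
  rw [← Z_iso hadd e]
  have hj' : Mono (j ≫ e.inv) := mono_comp _ _
  refine h.2 W (j ≫ e.inv) hj' hW (fun hi => hIso ?_)
  have : IsIso ((j ≫ e.inv) ≫ e.hom) := IsIso.comp_isIso
  simpa using this

end Zlemmas

/-! ### Third isomorphism short exact sequence -/

open CategoryTheory.Abelian

attribute [local instance] Pseudoelement.objectToSort Pseudoelement.homToFun

lemma third_iso_ses {A K X : C} (f : A ⟶ K) (g : K ⟶ X) [Mono f] [Mono g] :
    ∃ (δ : cokernel f ⟶ cokernel (f ≫ g)) (ρ : cokernel (f ≫ g) ⟶ cokernel g)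
      (w : δ ≫ ρ = 0), (ShortComplex.mk δ ρ w).ShortExact := by
  refine ⟨cokernel.desc f (g ≫ cokernel.π (f ≫ g)) (by rw [← Category.assoc, cokernel.condition]),
    cokernel.desc (f ≫ g) (cokernel.π g) (by simp), ?_, ?_⟩
  · apply coequalizer.hom_ext
    simp
  · set δ := cokernel.desc f (g ≫ cokernel.π (f ≫ g)) (by rw [← Category.assoc, cokernel.condition])
    set ρ := cokernel.desc (f ≫ g) (cokernel.π g) (by simp)
    have hπδ : cokernel.π f ≫ δ = g ≫ cokernel.π (f ≫ g) := cokernel.π_desc _ _ _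
    have hπρ : cokernel.π (f ≫ g) ≫ ρ = cokernel.π g := cokernel.π_desc _ _ _
    have hmono : Mono δ := by
      apply Pseudoelement.mono_of_zero_of_map_zero
      intro a ha
      obtain ⟨k, hk⟩ := Pseudoelement.pseudo_surjective_of_epi (cokernel.π f) a
      rw [← hk] at ha ⊢
      rw [← Pseudoelement.comp_apply, hπδ, Pseudoelement.comp_apply] at ha
      have hexact := Pseudoelement.pseudo_exact_of_exact (S := ShortComplex.mk (f ≫ g)
        (cokernel.π (f ≫ g)) (cokernel.condition _))
        (ShortComplex.exact_of_g_is_cokernel _ (cokernelIsCokernel (f ≫ g)))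
      obtain ⟨a', ha'⟩ := hexact _ ha
      rw [Pseudoelement.comp_apply] at ha'
      have : g (f a') = g k := ha'
      have hfk : f a' = k := Pseudoelement.pseudo_injective_of_mono g this
      rw [← hfk, ← Pseudoelement.comp_apply, cokernel.condition, Pseudoelement.zero_apply]
    haveI hepi : Epi ρ := by
      have : Epi (cokernel.π (f ≫ g) ≫ ρ) := by rw [hπρ]; infer_instance
      exact epi_of_epi (cokernel.π (f ≫ g)) ρ
    apply ShortComplex.ShortExact.mk
    apply Pseudoelement.exact_of_pseudo_exact
    intro b hb
    obtain ⟨x, hx⟩ := Pseudoelement.pseudo_surjective_of_epi (cokernel.π (f ≫ g)) b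
    have key : Pseudoelement.pseudoApply ρ b = Pseudoelement.pseudoApply (cokernel.π g) x := by
      rw [← hx, ← Pseudoelement.comp_apply]
      congr 1
    have hb2 : Pseudoelement.pseudoApply (cokernel.π g) x = 0 := by
      rw [← key]; exact hb
    have hexact := Pseudoelement.pseudo_exact_of_exact (S := ShortComplex.mk g
      (cokernel.π g) (cokernel.condition _))
      (ShortComplex.exact_of_g_is_cokernel _ (cokernelIsCokernel g))
    obtain ⟨k, hk⟩ := hexact _ hb2
    refine ⟨(cokernel.π f) k, ?_⟩
    show Pseudoelement.pseudoApply δ _ = b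
    rw [← Pseudoelement.comp_apply, hπδ, Pseudoelement.comp_apply, hk, hx]

/-! ### HN filtration constructions -/

lemma hn_m_pos {Z : C → ℂ} {K : C} (F : HNFiltration C Z K) (hK : ¬ IsZero K) : 0 < F.m := by
  by_contra h
  push_neg at h
  have hm : F.m = 0 := by omega
  have h0 : (Fin.last F.m) = (0 : Fin (F.m+1)) := by ext; simp [hm]
  have hz : IsZero (F.obj (Fin.last F.m)) := by rw [h0]; exact F.zero
  haveI := F.top
  exact hK (IsZero.of_iso hz (asIso (F.incl (Fin.last F.m))).symm)

lemma hn_single {Z : C → ℂ} (hadd : IsAdditive C Z) {X : C} (h : IsSemistable C Z X) :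
    Nonempty (HNFiltration C Z X) := by
  classical
  refine ⟨{
    m := 1
    obj := fun j => if j = 0 then (0 : C) else X
    incl := fun j => if hj : j = 0 then 0 else eqToHom (if_neg hj)
    mono := ?_
    step := fun _ => 0
    fac := ?_
    zero := ?_
    top := ?_
    quot_semistable := ?_
    decreasing := ?_ }⟩
  · intro j
    by_cases hj : j = 0
    · rw [dif_pos hj]
      refine mono_of_isZero_src ?_ _
      rw [if_pos hj]
      exact isZero_zero C
    · rw [dif_neg hj]
      infer_instance
  · intro j
    have h1 : j.castSucc = (0 : Fin 2) := by
      have := j.isLt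
      ext
      simp only [Fin.coe_castSucc, Fin.val_zero]
      omega
    rw [zero_comp, dif_pos h1]
  · rw [if_pos rfl]
    exact isZero_zero C
  · rw [dif_neg (show (Fin.last 1) ≠ 0 by decide)]
    infer_instance
  · intro j
    have h1 : j.succ ≠ (0 : Fin 2) := Fin.succ_ne_zero j
    have e : cokernel (0 : (if j.castSucc = 0 then (0:C) else X) ⟶
        (if j.succ = 0 then (0:C) else X)) ≅ X :=
      cokernelZeroIsoTarget ≪≫ eqToIso (if_neg h1)
    exact semistable_of_iso hadd e.symm h
  · intro a b hab
    have h1 := a.isLt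
    have h2 := b.isLt
    have h3 : (a : ℕ) < (b : ℕ) := hab
    omega

lemma hn_extend {Z : C → ℂ} (hadd : IsAdditive C Z) {K X : C} (F : HNFiltration C Z K)
    (i : K ⟶ X) [Mono i] (hB : IsSemistable C Z (cokernel i))
    (hφ : ∀ j : Fin F.m, uphase (Z (cokernel i)) < uphase (Z (cokernel (F.step j)))) :
    Nonempty (HNFiltration C Z X) := by
  classical
  set m := F.m with hmdef
  let obj' : Fin (m + 2) → C := fun j => if h : (j : ℕ) < m + 1 then F.obj ⟨j, h⟩ else X
  have hobj_lt : ∀ (j : Fin (m + 2)) (h : (j : ℕ) < m + 1), obj' j = F.obj ⟨j, h⟩ :=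
    fun j h => dif_pos h
  have hobj_top : ∀ (j : Fin (m + 2)), ¬ ((j : ℕ) < m + 1) → obj' j = X :=
    fun j h => dif_neg h
  have ecs : ∀ j : Fin (m + 1), obj' j.castSucc = F.obj ⟨(j : ℕ), j.isLt⟩ :=
    fun j => hobj_lt _ (by simp only [Fin.coe_castSucc]; exact j.isLt)
  have esc : ∀ (j : Fin (m + 1)) (h : (j : ℕ) < m), obj' j.succ = F.obj ⟨(j : ℕ) + 1, by omega⟩ :=
    fun j h => hobj_lt _ (by simp only [Fin.val_succ]; omega)
  have etop : ∀ (j : Fin (m + 1)), ¬ ((j : ℕ) < m) → obj' j.succ = X :=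
    fun j h => hobj_top _ (by simp only [Fin.val_succ]; omega)
  have elast : ∀ (j : Fin (m + 1)), ¬ ((j : ℕ) < m) → obj' j.castSucc = F.obj (Fin.last m) :=
    fun j h => (ecs j).trans (by
      congr 1
      ext
      simp only [Fin.val_last]
      have := j.isLt
      omega)
  let incl' : ∀ j, obj' j ⟶ X := fun j =>
    if h : (j : ℕ) < m + 1 then eqToHom (hobj_lt j h) ≫ F.incl ⟨j, h⟩ ≫ i
    else eqToHom (hobj_top j h)
  let step' : ∀ j : Fin (m + 1), obj' j.castSucc ⟶ obj' j.succ := fun j =>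
    if h : (j : ℕ) < m then
      eqToHom (ecs j) ≫ F.step ⟨(j : ℕ), h⟩ ≫ eqToHom (esc j h).symm
    else
      eqToHom (elast j h) ≫ F.incl (Fin.last m) ≫ i ≫ eqToHom (etop j h).symm
  have hstep_pos : ∀ (j : Fin (m + 1)) (h : (j : ℕ) < m),
      step' j = eqToHom (ecs j) ≫ F.step ⟨(j : ℕ), h⟩ ≫ eqToHom (esc j h).symm :=
    fun j h => dif_pos h
  have hstep_neg : ∀ (j : Fin (m + 1)) (h : ¬ ((j : ℕ) < m)),
      step' j = eqToHom (elast j h) ≫ F.incl (Fin.last m) ≫ i ≫ eqToHom (etop j h).symm :=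
    fun j h => dif_neg h
  have hincl_pos : ∀ (j : Fin (m + 2)) (h : (j : ℕ) < m + 1),
      incl' j = eqToHom (hobj_lt j h) ≫ F.incl ⟨j, h⟩ ≫ i := fun j h => dif_pos h
  have hincl_neg : ∀ (j : Fin (m + 2)) (h : ¬ ((j : ℕ) < m + 1)),
      incl' j = eqToHom (hobj_top j h) := fun j h => dif_neg h
  have hquot : ∀ j : Fin (m + 1),
      (∃ h : (j : ℕ) < m, Nonempty (cokernel (step' j) ≅ cokernel (F.step ⟨(j : ℕ), h⟩))) ∨
      (¬ ((j : ℕ) < m) ∧ Nonempty (cokernel (step' j) ≅ cokernel i)) := by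
    intro j
    by_cases h : (j : ℕ) < m
    · refine Or.inl ⟨h, ⟨(cokernelIsoOfEq (hstep_pos j h)).trans
        ((cokernelEpiComp _ _).trans (cokernelCompIsIso _ _))⟩⟩
    · haveI := F.top
      refine Or.inr ⟨h, ⟨(cokernelIsoOfEq (hstep_neg j h)).trans
        ((cokernelEpiComp _ _).trans ((cokernelEpiComp _ _).trans (cokernelCompIsIso _ _)))⟩⟩
  have hquotZ : ∀ j : Fin (m + 1), (∃ h : (j : ℕ) < m,
      Z (cokernel (step' j)) = Z (cokernel (F.step ⟨(j : ℕ), h⟩))) ∨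
      (¬ ((j : ℕ) < m) ∧ Z (cokernel (step' j)) = Z (cokernel i)) := by
    intro j
    rcases hquot j with ⟨h, ⟨e⟩⟩ | ⟨h, ⟨e⟩⟩
    · exact Or.inl ⟨h, Z_iso hadd e⟩
    · exact Or.inr ⟨h, Z_iso hadd e⟩
  refine ⟨{
    m := m + 1
    obj := obj'
    incl := incl'
    mono := ?_
    step := step'
    fac := ?_
    zero := ?_
    top := ?_
    quot_semistable := ?_
    decreasing := ?_ }⟩
  · intro j
    by_cases h : (j : ℕ) < m + 1
    · rw [hincl_pos j h]
      haveI := F.mono ⟨(j : ℕ), h⟩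
      infer_instance
    · rw [hincl_neg j h]
      infer_instance
  · intro j
    by_cases h : (j : ℕ) < m
    · have h2 : ((j.succ : Fin (m + 2)) : ℕ) < m + 1 := by simp only [Fin.val_succ]; omega
      have h3 : ((j.castSucc : Fin (m + 2)) : ℕ) < m + 1 := by
        simp only [Fin.coe_castSucc]; omega
      rw [hstep_pos j h, hincl_pos _ h2, hincl_pos _ h3]
      have hfac : F.step ⟨(j : ℕ), h⟩ ≫ F.incl (Fin.succ ⟨(j : ℕ), h⟩) ≫ i =
          F.incl (Fin.castSucc ⟨(j : ℕ), h⟩) ≫ i := by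
        rw [← Category.assoc, F.fac]
      have hmk : F.incl ⟨((j.succ : Fin (m + 2)) : ℕ), h2⟩ = F.incl (Fin.succ ⟨(j : ℕ), h⟩) := rfl
      have hmk2 : F.incl ⟨((j.castSucc : Fin (m + 2)) : ℕ), h3⟩ =
          F.incl (Fin.castSucc ⟨(j : ℕ), h⟩) := rfl
      rw [hmk, hmk2]
      simp only [Category.assoc, eqToHom_trans_assoc, eqToHom_refl, Category.id_comp]
      rw [hfac]
    · have h2 : ¬ (((j.succ : Fin (m + 2)) : ℕ) < m + 1) := by simp only [Fin.val_succ]; omega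
      have h3 : ((j.castSucc : Fin (m + 2)) : ℕ) < m + 1 := by
        simp only [Fin.coe_castSucc]; omega
      rw [hstep_neg j h, hincl_pos _ h3, hincl_neg _ h2]
      have key : ∀ (p q : Fin (m + 1)) (_ : p = q) (e : obj' j.castSucc = F.obj p)
          (e' : obj' j.castSucc = F.obj q), eqToHom e ≫ F.incl p = eqToHom e' ≫ F.incl q := by
        rintro p q rfl e e'
        rfl
      simp only [Category.assoc, eqToHom_trans, eqToHom_refl, Category.comp_id]
      conv_lhs => rw [← Category.assoc]
      conv_rhs => rw [← Category.assoc]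
      congr 1
      refine key _ _ ?_ _ _
      ext
      simp only [Fin.coe_castSucc, Fin.val_last]
      have := j.isLt
      omega
  · have h0 : ((0 : Fin (m + 2)) : ℕ) < m + 1 := by simp
    have he : obj' 0 = F.obj 0 := (hobj_lt 0 h0).trans (by congr 1)
    rw [he]
    exact F.zero
  · rw [hincl_neg _ (show ¬ (((Fin.last (m + 1)) : ℕ) < m + 1) by simp)]
    infer_instance
  · intro j
    rcases hquot j with ⟨h, ⟨e⟩⟩ | ⟨h, ⟨e⟩⟩
    · exact semistable_of_iso hadd e.symm (F.quot_semistable ⟨(j : ℕ), h⟩)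
    · exact semistable_of_iso hadd e.symm hB
  · intro a b hab
    have hab' : (a : ℕ) < (b : ℕ) := hab
    rcases hquotZ b with ⟨hb, hZb⟩ | ⟨hb, hZb⟩
    · have ha : (a : ℕ) < m := by omega
      rcases hquotZ a with ⟨ha2, hZa⟩ | ⟨ha2, hZa⟩
      · rw [hZa, hZb]
        exact F.decreasing _ _
          (show ((⟨(a : ℕ), ha2⟩ : Fin m) : ℕ) < ((⟨(b : ℕ), hb⟩ : Fin m) : ℕ) from hab')
      · omega
    · rcases hquotZ a with ⟨ha2, hZa⟩ | ⟨ha2, hZa⟩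
      · rw [hZa, hZb]
        exact hφ _
      · omega


/-! ### Composition series consequences -/

lemma decomp {n : ℕ} {S : Fin n → C} {Z : C → ℂ} (hadd : IsAdditive C Z)
    (hclass : ∀ X : C, Simple X → ∃ i, Nonempty (X ≅ S i))
    (hfl : ∀ X : C, ¬ IsZero X → Nonempty (CompSeries C X))
    (X : C) (hX : ¬ IsZero X) :
    ∃ c : Fin n → ℕ, Z X = ∑ i, (c i : ℂ) * Z (S i) ∧ c ≠ 0 := by
  obtain ⟨F⟩ := hfl X hX
  have key : ∀ j : Fin (F.m + 1), ∃ c : Fin n → ℕ,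
      Z (F.obj j) = ∑ i, (c i : ℂ) * Z (S i) ∧ ((j : ℕ) ≠ 0 → c ≠ 0) := by
    intro j
    induction j using Fin.induction with
    | zero =>
      refine ⟨0, by simp [Z_zero hadd F.zero], fun h => absurd (Fin.val_zero _) h⟩
    | succ j ih =>
      obtain ⟨c, hc, -⟩ := ih
      haveI hm1 : Mono (F.step j ≫ F.incl j.succ) := by rw [F.fac]; exact F.mono _
      haveI hm2 : Mono (F.step j) := mono_of_mono (F.step j) (F.incl j.succ)
      obtain ⟨i₀, ⟨e⟩⟩ := hclass _ (F.quot_simple j)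
      have hz : Z (F.obj j.succ) = Z (F.obj j.castSucc) + Z (S i₀) := by
        rw [Z_mono hadd (F.step j), Z_iso hadd e]
      refine ⟨c + Pi.single i₀ 1, ?_, ?_⟩
      · rw [hz, hc]
        have hterm : ∀ i, (((c + Pi.single i₀ 1 : Fin n → ℕ) i : ℕ) : ℂ) * Z (S i) =
            (c i : ℂ) * Z (S i) + (((Pi.single i₀ 1 : Fin n → ℕ) i : ℂ)) * Z (S i) := by
          intro i
          simp only [Pi.add_apply]
          push_cast
          ring
        rw [Finset.sum_congr rfl (fun i _ => hterm i), Finset.sum_add_distrib]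
        congr 1
        rw [Finset.sum_eq_single i₀]
        · simp
        · intro b _ hb
          simp [Pi.single_eq_of_ne hb]
        · intro hb
          simp at hb
      · intro _ h0
        have := congrFun h0 i₀
        simp at this
  haveI := F.top
  have hXZ : Z X = Z (F.obj (Fin.last F.m)) := Z_iso hadd (asIso (F.incl (Fin.last F.m))).symm
  have hm : F.m ≠ 0 := by
    intro h0
    apply hX
    have hlz : (Fin.last F.m) = (0 : Fin (F.m + 1)) := by ext; simp [h0]
    have hz := F.zero
    rw [← hlz] at hz
    exact hz.of_iso (asIso (F.incl (Fin.last F.m))).symm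
  obtain ⟨c, hc, hc0⟩ := key (Fin.last F.m)
  exact ⟨c, hXZ.trans hc, hc0 (by simp [hm])⟩

lemma im_pos {n : ℕ} {S : Fin n → C} {Z : C → ℂ} (hadd : IsAdditive C Z)
    (hclass : ∀ X : C, Simple X → ∃ i, Nonempty (X ≅ S i))
    (hfl : ∀ X : C, ¬ IsZero X → Nonempty (CompSeries C X))
    (hZpos : ∀ i, 0 < (Z (S i)).im) (X : C) (hX : ¬ IsZero X) : 0 < (Z X).im := by
  obtain ⟨c, hc, hc0⟩ := decomp hadd hclass hfl X hX
  rw [hc]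
  have hsum : (∑ i, (c i : ℂ) * Z (S i)).im = ∑ i, (c i : ℝ) * (Z (S i)).im := by
    rw [Complex.im_sum]
    refine Finset.sum_congr rfl (fun i _ => ?_)
    simp [Complex.mul_im]
  rw [hsum]
  apply Finset.sum_pos' (fun i _ => mul_nonneg (Nat.cast_nonneg _) (le_of_lt (hZpos i)))
  obtain ⟨i₀, h⟩ := Function.ne_iff.mp hc0
  exact ⟨i₀, Finset.mem_univ _,
    mul_pos (by exact_mod_cast Nat.pos_of_ne_zero h) (hZpos i₀)⟩

lemma im_nonneg {n : ℕ} {S : Fin n → C} {Z : C → ℂ} (hadd : IsAdditive C Z)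
    (hclass : ∀ X : C, Simple X → ∃ i, Nonempty (X ≅ S i))
    (hfl : ∀ X : C, ¬ IsZero X → Nonempty (CompSeries C X))
    (hZpos : ∀ i, 0 < (Z (S i)).im) (X : C) : 0 ≤ (Z X).im := by
  by_cases hX : IsZero X
  · rw [Z_zero hadd hX]
    simp
  · exact le_of_lt (im_pos hadd hclass hfl hZpos X hX)

end HNAux


open HNAux

/-- Let `A` be a finite-length abelian category with finitely many iso-classes of simple
objects `S 0, ..., S (n-1)`. Every additive `Z` sending each `[Sᵢ]` to the strict upper
half-plane takes every nonzero object to the semi-closed upper half-plane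
`{r e^{iπθ} : r > 0, 0 < θ ≤ 1}`, and satisfies the Harder–Narasimhan property:
every nonzero object admits a finite HN filtration with `Z`-semistable quotients of
strictly decreasing phases. -/
theorem finite_heart_stability (n : ℕ) (S : Fin n → C) (hsimple : ∀ i, Simple (S i))
    (hclass : ∀ X : C, Simple X → ∃ i, Nonempty (X ≅ S i))
    (hfl : ∀ X : C, ¬ IsZero X → Nonempty (CompSeries C X))
    (Z : C → ℂ) (hadd : IsAdditive C Z)
    (hZ : ∀ i, 0 < (Z (S i)).im) :
    (∀ X : C, ¬ IsZero X → InUHP (Z X)) ∧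
    (∀ X : C, ¬ IsZero X → Nonempty (HNFiltration C Z X)) := by
  classical
  have him : ∀ X : C, ¬ IsZero X → 0 < (Z X).im := im_pos hadd hclass hfl hZ
  have hnz_of_im : ∀ Q : C, 0 < (Z Q).im → ¬ IsZero Q := by
    intro Q h hq
    rw [Z_zero hadd hq] at h
    simp at h
  constructor
  · -- part 1 : values in the semi-closed upper half-plane
    intro X hX
    have h1 := him X hX
    have hz0 : Z X ≠ 0 := fun h => by simp [h] at h1
    refine ⟨‖Z X‖, uphase (Z X), norm_pos_iff.mpr hz0,
      div_pos (arg_mem h1).1 Real.pi_pos, ?_, ?_⟩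
    · rw [uphase, div_le_one Real.pi_pos]
      exact Complex.arg_le_pi _
    · have harg : ((uphase (Z X) : ℝ) : ℂ) * (Real.pi : ℂ) = (((Z X).arg : ℝ) : ℂ) := by
        rw [uphase]
        push_cast
        exact div_mul_cancel₀ _ (by exact_mod_cast Real.pi_ne_zero)
      rw [harg]
      exact (Complex.norm_mul_exp_arg_mul_I _).symm
  · -- part 2 : existence of HN filtrations
    intro X₀ hX₀
    obtain ⟨c₀, hc₀, hc₀0⟩ := decomp hadd hclass hfl X₀ hX₀
    obtain ⟨i₀, _⟩ := Function.ne_iff.mp hc₀0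
    haveI hne : Nonempty (Fin n) := ⟨i₀⟩
    set ε : ℝ := Finset.univ.inf' Finset.univ_nonempty (fun i => (Z (S i)).im) with hεdef
    have hε : 0 < ε := by
      rw [hεdef, Finset.lt_inf'_iff]
      exact fun i _ => hZ i
    have him_expr : ∀ (Q : C) (c : Fin n → ℕ), Z Q = ∑ i, (c i : ℂ) * Z (S i) →
        (Z Q).im = ∑ i, (c i : ℝ) * (Z (S i)).im := by
      intro Q c hc
      rw [hc, Complex.im_sum]
      exact Finset.sum_congr rfl fun i _ => by simp [Complex.mul_im]
    have hcoord : ∀ (Q : C) (c : Fin n → ℕ), Z Q = ∑ i, (c i : ℂ) * Z (S i) →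
        ∀ i, (c i : ℝ) * (Z (S i)).im ≤ (Z Q).im := by
      intro Q c hc i
      rw [him_expr Q c hc]
      exact Finset.single_le_sum
        (fun i _ => mul_nonneg (Nat.cast_nonneg _) (hZ i).le) (Finset.mem_univ i)
    have him_ge : ∀ Y : C, ¬ IsZero Y → ε ≤ (Z Y).im := by
      intro Y hY
      obtain ⟨c, hc, hc0⟩ := decomp hadd hclass hfl Y hY
      obtain ⟨i₁, h1⟩ := Function.ne_iff.mp hc0
      have h2 : ε ≤ (Z (S i₁)).im := Finset.inf'_le _ (Finset.mem_univ _)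
      have h3 : (1 : ℝ) ≤ (c i₁ : ℝ) := by exact_mod_cast Nat.one_le_iff_ne_zero.mpr h1
      have h4 := hcoord Y c hc i₁
      nlinarith [hZ i₁]
    suffices H : ∀ k : ℕ, ∀ Y : C, ¬ IsZero Y → (Z Y).im ≤ (k : ℝ) * ε →
        Nonempty (HNFiltration C Z Y) by
      refine H ⌈(Z X₀).im / ε⌉₊ X₀ hX₀ ?_
      have := Nat.le_ceil ((Z X₀).im / ε)
      rw [div_le_iff₀ hε] at this
      exact this
    intro k
    induction k using Nat.strong_induction_on with
    | _ k IH =>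
      intro Y hY hbound
      -- the set of Z-values of nonzero quotients of Y
      set W : Set ℂ := {z | ∃ (A Q : C) (f : A ⟶ Y) (g : Y ⟶ Q) (w : f ≫ g = 0),
        (ShortComplex.mk f g w).ShortExact ∧ ¬ IsZero Q ∧ Z Q = z} with hWdef
      have hWmem : ∀ (Q : C) (g : Y ⟶ Q), Epi g → ¬ IsZero Q → Z Q ∈ W := by
        intro Q g hg hQ
        haveI := hg
        exact ⟨kernel g, Q, kernel.ι g, g, kernel.condition g, ses_of_epi g, hQ, rfl⟩
      have hWmono : ∀ (A : C) (f : A ⟶ Y), Mono f → ¬ IsZero (cokernel f) →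
          Z (cokernel f) ∈ W := by
        intro A f hf hc
        haveI := hf
        exact ⟨A, cokernel f, f, cokernel.π f, cokernel.condition f, ses_of_mono f, hc, rfl⟩
      have hWsub : W ⊆ ((Fintype.piFinset (fun _ : Fin n => Finset.range (k+1))).image
          (fun c : Fin n → ℕ => ∑ i, (c i : ℂ) * Z (S i)) : Finset ℂ) := by
        rintro z ⟨A, Q, f, g, w, hse, hQ, rfl⟩
        have hZsum := hadd _ hse
        have himQ : (Z Q).im ≤ (Z Y).im := by
          have h5 := im_nonneg hadd hclass hfl hZ A
          have h6 := congrArg Complex.im hZsum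
          simp only [Complex.add_im] at h6
          linarith
        obtain ⟨c, hc, -⟩ := decomp hadd hclass hfl Q hQ
        refine Finset.mem_coe.mpr (Finset.mem_image.mpr ⟨c, ?_, hc.symm⟩)
        rw [Fintype.mem_piFinset]
        intro i
        rw [Finset.mem_range]
        have h7 := hcoord Q c hc i
        have h8 : ε ≤ (Z (S i)).im := Finset.inf'_le _ (Finset.mem_univ _)
        have h9 : (c i : ℝ) * ε ≤ (k : ℝ) * ε := by nlinarith [Nat.cast_nonneg (α := ℝ) (c i)]
        have h10 : (c i : ℝ) ≤ (k : ℝ) := le_of_mul_le_mul_right h9 hε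
        have : c i ≤ k := by exact_mod_cast h10
        omega
      have hWfin : W.Finite := Set.Finite.subset (Finset.finite_toSet _) hWsub
      have hWne : W.Nonempty := ⟨Z Y, hWmem Y (𝟙 Y) inferInstance hY⟩
      obtain ⟨z₁, hz₁W, hz₁min⟩ := Set.exists_min_image W uphase hWfin hWne
      obtain ⟨z₀, hz₀W2, hz₀max⟩ := Set.exists_max_image {z ∈ W | uphase z = uphase z₁}
        Complex.im (hWfin.subset (Set.sep_subset _ _)) ⟨z₁, hz₁W, rfl⟩
      have hz₀W : z₀ ∈ W := hz₀W2.1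
      have hmin : ∀ z ∈ W, uphase z₀ ≤ uphase z := by
        intro z hz
        rw [hz₀W2.2]
        exact hz₁min z hz
      have hmax : ∀ z ∈ W, uphase z = uphase z₀ → z.im ≤ z₀.im := by
        intro z hz hphase
        exact hz₀max z ⟨hz, by rw [hphase, hz₀W2.2]⟩
      obtain ⟨A, B, f, g, w, hse, hBnz, hZB⟩ := hz₀W
      haveI := hse.mono_f
      haveI := hse.epi_g
      have hZsum : Z Y = Z A + Z B := hadd _ hse
      -- every nonzero quotient of Y of minimal phase is semistable
      have hss : ∀ (Q : C) (g' : Y ⟶ Q), Epi g' → ¬ IsZero Q →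
          uphase (Z Q) ≤ uphase z₀ → IsSemistable C Z Q := by
        intro Q g' hg hQ hup
        haveI := hg
        refine ⟨hQ, fun Ys j hj hYs hIso => ?_⟩
        haveI := hj
        have hqnz := cokernel_not_isZero j hIso
        have hmem : Z (cokernel j) ∈ W := hWmem _ (g' ≫ cokernel.π j) (epi_comp _ _) hqnz
        have h1 : uphase (Z Q) ≤ uphase (Z (cokernel j)) := le_trans hup (hmin _ hmem)
        have himYs := him Ys hYs
        have himq := him _ hqnz
        have hZQ : Z Q = Z Ys + Z (cokernel j) := Z_mono hadd j
        rw [hZQ] at h1 ⊢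
        exact seesaw_left_le himYs himq h1
      by_cases hA : IsZero A
      · -- Y itself is semistable
        have hZY : Z Y = z₀ := by rw [hZsum, Z_zero hadd hA, zero_add, hZB]
        exact hn_single hadd (hss Y (𝟙 Y) inferInstance hY (le_of_eq (by rw [hZY])))
      · -- A is nonzero : recurse
        have hssB : IsSemistable C Z B := hss B g inferInstance hBnz (le_of_eq (by rw [hZB]))
        have hk1 : 1 ≤ k := by
          rcases Nat.eq_zero_or_pos k with rfl | hk
          · exfalso
            have := him_ge Y hY
            push_cast at hbound
            linarith
          · exact hk
        have hbA : (Z A).im ≤ ((k - 1 : ℕ) : ℝ) * ε := by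
          have h6 := congrArg Complex.im hZsum
          simp only [Complex.add_im] at h6
          have h7 := him_ge B hBnz
          rw [Nat.cast_sub hk1]
          push_cast
          linarith
        obtain ⟨F⟩ := IH (k - 1) (by omega) A hA hbA
        have hmpos : 0 < F.m := hn_m_pos F hA
        -- the top quotient of the filtration of A
        set j₀ : Fin F.m := ⟨F.m - 1, by omega⟩ with hj₀def
        have hj₀succ : j₀.succ = Fin.last F.m := by
          ext
          simp only [Fin.val_succ, Fin.val_last, Fin.val_mk]
          exact Nat.sub_add_cancel hmpos
        haveI : IsIso (F.incl j₀.succ) := by rw [hj₀succ]; exact F.top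
        set u : F.obj j₀.succ ⟶ Y := F.incl j₀.succ ≫ f with hudef
        haveI hmu : Mono u := mono_comp _ _
        haveI hm1 : Mono (F.step j₀ ≫ F.incl j₀.succ) := by rw [F.fac]; exact F.mono _
        haveI hm2 : Mono (F.step j₀) := mono_of_mono (F.step j₀) (F.incl j₀.succ)
        obtain ⟨δ, ρ, w3, hse3⟩ := third_iso_ses (F.step j₀) u
        have hZD : Z (cokernel (F.step j₀ ≫ u)) =
            Z (cokernel (F.step j₀)) + Z (cokernel u) := hadd _ hse3
        have hZu : Z (cokernel u) = z₀ := by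
          have e1 : cokernel u ≅ cokernel f := cokernelEpiComp _ _
          have e2 : cokernel f ≅ B :=
            IsColimit.coconePointUniqueUpToIso (cokernelIsCokernel f) hse.gIsCokernel
          rw [Z_iso hadd e1, Z_iso hadd e2, hZB]
        have hQnz : ¬ IsZero (cokernel (F.step j₀)) := (F.quot_semistable j₀).1
        have himQ0 : 0 < (Z (cokernel (F.step j₀))).im := him _ hQnz
        have himz₀ : 0 < z₀.im := by
          rw [← hZB]
          exact him B hBnz
        -- minimality forces the top quotient to have phase > phase z₀
        have hkey : uphase z₀ < uphase (Z (cokernel (F.step j₀))) := by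
          by_contra hcon
          push_neg at hcon
          have hDnz : ¬ IsZero (cokernel (F.step j₀ ≫ u)) := by
            apply hnz_of_im
            rw [hZD, hZu, Complex.add_im]
            linarith
          have hWD : Z (cokernel (F.step j₀ ≫ u)) ∈ W := hWmono _ _ inferInstance hDnz
          have h1 : uphase (Z (cokernel (F.step j₀ ≫ u))) ≤ uphase z₀ := by
            rw [hZD, hZu]
            exact seesaw_right_le himQ0 himz₀ hcon
          have h2 : uphase z₀ ≤ uphase (Z (cokernel (F.step j₀ ≫ u))) := hmin _ hWD
          have h3 := hmax _ hWD (le_antisymm h1 h2)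
          rw [hZD, hZu, Complex.add_im] at h3
          linarith
        -- extend the filtration of A by Y
        have e2 : cokernel f ≅ B :=
          IsColimit.coconePointUniqueUpToIso (cokernelIsCokernel f) hse.gIsCokernel
        have hZf : Z (cokernel f) = z₀ := by rw [Z_iso hadd e2, hZB]
        have hssf : IsSemistable C Z (cokernel f) := semistable_of_iso hadd e2.symm hssB
        refine hn_extend hadd F f hssf ?_
        intro j
        rw [hZf]
        rcases eq_or_lt_of_le (show (j : ℕ) ≤ (j₀ : ℕ) from by
          have := j.isLt
          simp only [hj₀def]
          omega) with heq | hlt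
        · have : j = j₀ := by ext; exact heq
          rw [this]
          exact hkey
        · exact lt_trans hkey (F.decreasing j j₀ hlt)
end

section
/- Given a lattice Λ (free abelian group of finite rank) and Z : Λ → ℂ, suppose there exists a quadratic form Q on Λ ⊗ ℝ such that Q is negative definite on the kernel of Z ⊗ ℝ and Q(v) ≥ 0 for all v in a set S ⊂ Λ \ {0}. Then there exists a norm ‖·‖ on Λ ⊗ ℝ and a constant c > 0 such that |Z(v)| ≥ c‖v‖ for all v ∈ S. -/
open TensorProduct

/-- Kontsevich–Soibelman support property implies the norm formulation: if there is a
quadratic form `Q` on `Λ ⊗ ℝ` that is negative definite on the kernel of the ℝ-linear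
extension of `Z` and nonnegative on a set `S` of nonzero lattice vectors, then there is
a norm `‖·‖` on `Λ ⊗ ℝ` and a constant `c > 0` with `|Z(v)| ≥ c‖v‖` for all `v ∈ S`. -/
theorem support_property_of_quadratic_form
    (Λ : Type) [AddCommGroup Λ] [Module.Free ℤ Λ] [Module.Finite ℤ Λ]
    (Z : Λ →+ ℂ) (ZR : TensorProduct ℤ ℝ Λ →ₗ[ℝ] ℂ)
    (hZR : ∀ v : Λ, ZR ((1 : ℝ) ⊗ₜ[ℤ] v) = Z v)
    (Q : QuadraticForm ℝ (TensorProduct ℤ ℝ Λ))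
    (hneg : ∀ v : TensorProduct ℤ ℝ Λ, ZR v = 0 → v ≠ 0 → Q v < 0)
    (S : Set Λ) (hS : (0 : Λ) ∉ S)
    (hpos : ∀ s ∈ S, 0 ≤ Q ((1 : ℝ) ⊗ₜ[ℤ] s)) :
    ∃ nm : TensorProduct ℤ ℝ Λ → ℝ,
      (∀ v, 0 ≤ nm v) ∧ (∀ v, nm v = 0 ↔ v = 0) ∧
      (∀ (a : ℝ) (v), nm (a • v) = |a| * nm v) ∧
      (∀ v w, nm (v + w) ≤ nm v + nm w) ∧
      ∃ c : ℝ, 0 < c ∧ ∀ s ∈ S, c * nm ((1 : ℝ) ⊗ₜ[ℤ] s) ≤ ‖Z s‖ := by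
  classical
  set V := TensorProduct ℤ ℝ Λ with hVdef
  let b := Module.finBasis ℝ V
  set n := Module.finrank ℝ V
  let e : V ≃ₗ[ℝ] (Fin n → ℝ) := b.equivFun
  refine ⟨fun v => ‖e v‖, fun v => norm_nonneg _, ?_, ?_, ?_, ?_⟩
  · intro v
    rw [norm_eq_zero]
    exact ⟨fun h => e.injective (by simpa using h), fun h => by simp [h]⟩
  · intro a v
    show ‖e (a • v)‖ = |a| * ‖e v‖
    rw [map_smul, norm_smul, Real.norm_eq_abs]
  · intro v w
    show ‖e (v + w)‖ ≤ ‖e v‖ + ‖e w‖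
    rw [map_add]; exact norm_add_le _ _
  · -- continuity of transported quadratic form and linear map
    let g : (Fin n → ℝ) → ℝ := fun x => Q (e.symm x)
    let f : (Fin n → ℝ) → ℝ := fun x => ‖ZR (e.symm x)‖
    have hg : Continuous g := by
      let Q' : QuadraticForm ℝ (Fin n → ℝ) := Q.comp e.symm.toLinearMap
      let B := QuadraticMap.associatedHom ℝ Q'
      have hQ' : ∀ x, Q' x = B x x := by
        intro x
        conv_lhs => rw [← QuadraticMap.toQuadraticMap_associated ℝ Q']
        exact B.toQuadraticMap_apply x
      let L : (Fin n → ℝ) →ₗ[ℝ] ((Fin n → ℝ) →L[ℝ] ℝ) :=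
        (LinearMap.toContinuousLinearMap.toLinearMap).comp (B : _)
      have hL : Continuous L := L.continuous_of_finiteDimensional
      have h1 : Continuous fun x : Fin n → ℝ => L x x :=
        isBoundedBilinearMap_apply.continuous.comp (hL.prodMk continuous_id)
      have : g = fun x => L x x := by
        funext x
        show Q (e.symm x) = B x x
        exact hQ' x
      rw [this]; exact h1
    have hf : Continuous f := by
      have h1 : Continuous fun x : Fin n → ℝ => ZR (e.symm x) :=
        (ZR.comp e.symm.toLinearMap).continuous_of_finiteDimensional
      simpa [f] using h1.norm
    let K : Set (Fin n → ℝ) := Metric.sphere 0 1 ∩ {x | 0 ≤ g x}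
    have hK : IsCompact K :=
      (isCompact_sphere 0 1).inter_right (isClosed_le continuous_const hg)
    -- key: from s ∈ S with nonzero image, get a point of K
    have hmem : ∀ s ∈ S, ∀ (h : e ((1:ℝ) ⊗ₜ[ℤ] s) ≠ 0),
        (‖e ((1:ℝ) ⊗ₜ[ℤ] s)‖⁻¹ • e ((1:ℝ) ⊗ₜ[ℤ] s)) ∈ K := by
      intro s hs h
      have hn : ‖e ((1:ℝ) ⊗ₜ[ℤ] s)‖ ≠ 0 := norm_ne_zero_iff.mpr h
      constructor
      · simp [norm_smul, abs_of_nonneg (inv_nonneg.mpr (norm_nonneg _)),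
          inv_mul_cancel₀ hn]
      · show 0 ≤ g _
        have : e.symm (‖e ((1:ℝ) ⊗ₜ[ℤ] s)‖⁻¹ • e ((1:ℝ) ⊗ₜ[ℤ] s))
            = ‖e ((1:ℝ) ⊗ₜ[ℤ] s)‖⁻¹ • ((1:ℝ) ⊗ₜ[ℤ] s) := by
          rw [map_smul, e.symm_apply_apply]
        show 0 ≤ Q (e.symm _)
        rw [this, QuadraticMap.map_smul]
        have := hpos s hs
        positivity
    have hfpos : ∀ x ∈ K, 0 < f x := by
      intro x hx
      rcases (norm_nonneg (ZR (e.symm x))).lt_or_eq with h | h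
      · exact h
      · exfalso
        have hz : ZR (e.symm x) = 0 := by
          have := h.symm
          rwa [norm_eq_zero] at this
        have hxne : e.symm x ≠ 0 := by
          intro h0
          have : x = 0 := by
            have := congrArg e h0
            simpa using this
          rw [this] at hx
          simpa using hx.1
        have := hneg _ hz hxne
        exact absurd hx.2 (not_le.mpr this)
    by_cases hKne : K.Nonempty
    · obtain ⟨x₀, hx₀K, hmin⟩ := hK.exists_isMinOn hKne hf.continuousOn
      refine ⟨f x₀, hfpos _ hx₀K, ?_⟩
      intro s hs
      by_cases h : e ((1:ℝ) ⊗ₜ[ℤ] s) = 0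
      · show f x₀ * ‖e ((1:ℝ) ⊗ₜ[ℤ] s)‖ ≤ _
        rw [h, norm_zero, mul_zero]; exact norm_nonneg _
      · have hn : (0:ℝ) < ‖e ((1:ℝ) ⊗ₜ[ℤ] s)‖ := norm_pos_iff.mpr h
        have hu : f x₀ ≤ f (‖e ((1:ℝ) ⊗ₜ[ℤ] s)‖⁻¹ • e ((1:ℝ) ⊗ₜ[ℤ] s)) := hmin (hmem s hs h)
        have hfu : f (‖e ((1:ℝ) ⊗ₜ[ℤ] s)‖⁻¹ • e ((1:ℝ) ⊗ₜ[ℤ] s))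
            = ‖e ((1:ℝ) ⊗ₜ[ℤ] s)‖⁻¹ * ‖Z s‖ := by
          show ‖ZR (e.symm _)‖ = _
          rw [map_smul, e.symm_apply_apply, map_smul]
          rw [show ZR ((1:ℝ) ⊗ₜ[ℤ] s) = Z s from hZR s]
          simp [norm_smul, abs_of_nonneg (inv_nonneg.mpr (norm_nonneg _))]
        rw [hfu] at hu
        calc f x₀ * ‖e ((1:ℝ) ⊗ₜ[ℤ] s)‖
            ≤ (‖e ((1:ℝ) ⊗ₜ[ℤ] s)‖⁻¹ * ‖Z s‖) * ‖e ((1:ℝ) ⊗ₜ[ℤ] s)‖ :=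
              mul_le_mul_of_nonneg_right hu hn.le
          _ = ‖Z s‖ := by field_simp
    · refine ⟨1, one_pos, ?_⟩
      intro s hs
      by_cases h : e ((1:ℝ) ⊗ₜ[ℤ] s) = 0
      · show (1:ℝ) * ‖e ((1:ℝ) ⊗ₜ[ℤ] s)‖ ≤ _
        rw [h, norm_zero, mul_zero]; exact norm_nonneg _
      · exact absurd ⟨_, hmem s hs h⟩ hKne
end
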